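/- Let G and H be finite connected graphs, each with at least one edge, let f : G → H be a graph homomorphism, v ∈ V(G) a non-isolated vertex, and w = f(v). Then every realizable element commutes with every element of the image of f_*: for every α ∈ π₁²(G,v) and every ϖ ∈ Π(f,v), one has f_*(α)·ϖ = ϖ·f_*(α) in π₁²(H,w). -/

import Mathlib

structure PGraph where
  V : Type
  E : V → V → Prop
  symm : ∀ {x y}, E x y → E y x

def IsGraphHom (G H : PGraph) (f : G.V → H.V) : Prop :=
  ∀ {x y}, G.E x y → H.E (f x) (f y)

structure Walk (G : PGraph) (a b : G.V) where
  len : ℕ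
  toFun : ℕ → G.V
  start_eq : toFun 0 = a
  end_eq : toFun len = b
  adj : ∀ i, i < len → G.E (toFun i) (toFun (i + 1))

structure MultiHom (G H : PGraph) where
  toFun : G.V → Set H.V
  nonempty : ∀ x, (toFun x).Nonempty
  edge : ∀ {x y}, G.E x y → ∀ a ∈ toFun x, ∀ b ∈ toFun y, H.E a b

def MultiHom.le {G H : PGraph} (η η' : MultiHom G H) : Prop :=
  ∀ x, η.toFun x ⊆ η'.toFun x

def SameComponent {G H : PGraph} (η η' : MultiHom G H) : Prop :=
  Relation.ReflTransGen (fun a b => MultiHom.le a b ∨ MultiHom.le b a) η η'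

def ofHom {G H : PGraph} (f : G.V → H.V) (hf : IsGraphHom G H f) : MultiHom G H where
  toFun x := {f x}
  nonempty x := ⟨f x, rfl⟩
  edge := by
    intro x y hxy a ha b hb
    rw [Set.mem_singleton_iff] at ha hb
    subst ha; subst hb
    exact hf hxy

def prodI (G : PGraph) (n : ℕ) : PGraph where
  V := G.V × Fin (n + 1)
  E := fun p q => G.E p.1 q.1 ∧ p.2.val ≤ q.2.val + 1 ∧ q.2.val ≤ p.2.val + 1
  symm := by
    rintro p q ⟨h1, h2, h3⟩
    exact ⟨G.symm h1, h3, h2⟩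

def MoveA {G : PGraph} {a b : G.V} (γ δ : Walk G a b) : Prop :=
  δ.len = γ.len + 2 ∧ ∃ k ≤ γ.len,
    (∀ i ≤ k, δ.toFun i = γ.toFun i) ∧
    (∀ i, k ≤ i → i ≤ γ.len → δ.toFun (i + 2) = γ.toFun i)

def MoveB {G : PGraph} {a b : G.V} (γ δ : Walk G a b) : Prop :=
  γ.len = δ.len ∧ ∃ j, ∀ i ≤ γ.len, i ≠ j → γ.toFun i = δ.toFun i

def Eqv1 {G : PGraph} {a b : G.V} : Walk G a b → Walk G a b → Prop :=
  Relation.EqvGen MoveA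

def Eqv2 {G : PGraph} {a b : G.V} : Walk G a b → Walk G a b → Prop :=
  Relation.EqvGen (fun γ δ => MoveA γ δ ∨ MoveB γ δ)

noncomputable def PGraph.dist (G : PGraph) (a b : G.V) : ℕ :=
  sInf {n | ∃ γ : Walk G a b, γ.len = n}

def PGraph.Connected (G : PGraph) : Prop := ∀ a b : G.V, Nonempty (Walk G a b)

def PGraph.Bipartite (G : PGraph) : Prop :=
  ∃ c : G.V → ZMod 2, ∀ {x y}, G.E x y → c x ≠ c y

def constWalk {G : PGraph} (a : G.V) : Walk G a a :=
  ⟨0, fun _ => a, rfl, rfl, fun i hi => absurd hi (by omega)⟩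

def Walk.concat {G : PGraph} {a b c : G.V} (γ : Walk G a b) (δ : Walk G b c) :
    Walk G a c where
  len := γ.len + δ.len
  toFun i := if i ≤ γ.len then γ.toFun i else δ.toFun (i - γ.len)
  start_eq := by simp [γ.start_eq]
  end_eq := by
    by_cases h : δ.len = 0
    · have hbc : b = c := by
        have h1 := δ.end_eq
        rw [h, δ.start_eq] at h1
        exact h1
      simp [h, γ.end_eq, hbc]
    · have h1 : ¬ (γ.len + δ.len ≤ γ.len) := by omega
      try dsimp only
      rw [if_neg h1]
      have h2 : γ.len + δ.len - γ.len = δ.len := by omega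
      rw [h2, δ.end_eq]
  adj := by
    intro i hi
    try dsimp only
    rcases lt_trichotomy i γ.len with h | h | h
    · rw [if_pos (by omega : i ≤ γ.len), if_pos (by omega : i + 1 ≤ γ.len)]
      exact γ.adj i h
    · have hδ : 0 < δ.len := by omega
      rw [if_pos (by omega : i ≤ γ.len), if_neg (by omega : ¬ i + 1 ≤ γ.len)]
      have h2 : i + 1 - γ.len = 1 := by omega
      rw [h2, h, γ.end_eq]
      have h3 := δ.adj 0 hδ
      rw [δ.start_eq] at h3
      exact h3
    · rw [if_neg (by omega : ¬ i ≤ γ.len), if_neg (by omega : ¬ i + 1 ≤ γ.len)]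
      have h2 : i + 1 - γ.len = (i - γ.len) + 1 := by omega
      rw [h2]
      exact δ.adj (i - γ.len) (by omega)

def Walk.reverse {G : PGraph} {a b : G.V} (γ : Walk G a b) : Walk G b a where
  len := γ.len
  toFun i := γ.toFun (γ.len - i)
  start_eq := by simp [γ.end_eq]
  end_eq := by simp [γ.start_eq]
  adj := by
    intro i hi
    have h1 : γ.len - i = (γ.len - (i + 1)) + 1 := by omega
    have h2 := γ.adj (γ.len - (i + 1)) (by omega)
    rw [← h1] at h2
    exact G.symm h2

def Walk.map {G H : PGraph} (f : G.V → H.V) (hf : IsGraphHom G H f) {a b : G.V}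
    (γ : Walk G a b) : Walk H (f a) (f b) where
  len := γ.len
  toFun i := f (γ.toFun i)
  start_eq := by (try dsimp only); rw [γ.start_eq]
  end_eq := by (try dsimp only); rw [γ.end_eq]
  adj := fun i hi => hf (γ.adj i hi)

def Walk.pow {G : PGraph} {a : G.V} (γ : Walk G a a) : ℕ → Walk G a a
  | 0 => constWalk a
  | n + 1 => (Walk.pow γ n).concat γ

def Walk.zpow {G : PGraph} {a : G.V} (γ : Walk G a a) : ℤ → Walk G a a
  | Int.ofNat n => γ.pow n
  | Int.negSucc n => γ.reverse.pow (n + 1)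
def finClip (n t : ℕ) : Fin (n + 1) := ⟨min t n, by omega⟩

def realizedWalk {G H : PGraph} {n : ℕ} (h : (prodI G n).V → H.V)
    (hh : IsGraphHom (prodI G n) H h) {v v' : G.V} (hvv' : G.E v v')
    {w : H.V} (h0 : h (v, finClip n 0) = w) (hN : h (v, finClip n n) = w) :
    Walk H w w where
  len := 2 * n
  toFun i := if i % 2 = 0 then h (v, finClip n (i / 2)) else h (v', finClip n (i / 2))
  start_eq := by
    try dsimp only
    rw [if_pos (by norm_num : (0:ℕ) % 2 = 0), Nat.zero_div]
    exact h0
  end_eq := by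
    try dsimp only
    rw [if_pos (by omega : (2 * n) % 2 = 0)]
    have h2 : 2 * n / 2 = n := by omega
    rw [h2]
    exact hN
  adj := by
    intro i hi
    try dsimp only
    rcases Nat.even_or_odd i with he | ho
    · obtain ⟨t, ht⟩ := he
      rw [if_pos (by omega : i % 2 = 0), if_neg (by omega : ¬ (i + 1) % 2 = 0)]
      have h4 : (i + 1) / 2 = i / 2 := by omega
      rw [h4]
      refine hh ⟨hvv', ?_, ?_⟩ <;> ((try dsimp only); omega)
    · obtain ⟨t, ht⟩ := ho
      rw [if_neg (by omega : ¬ i % 2 = 0), if_pos (by omega : (i + 1) % 2 = 0)]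
      refine hh ⟨G.symm hvv', ?_, ?_⟩ <;> ((try dsimp only [finClip]); omega)

def Realizable {G H : PGraph} (f : G.V → H.V) (v : G.V) (ω : Walk H (f v) (f v)) : Prop :=
  ∃ (n : ℕ) (h : (prodI G n).V → H.V) (hh : IsGraphHom (prodI G n) H h)
    (hs : ∀ x, h (x, finClip n 0) = f x) (he : ∀ x, h (x, finClip n n) = f x)
    (v' : G.V) (_ : G.E v v'),
    Eqv2 ω (realizedWalk h hh ‹G.E v v'› (hs v) (he v))
def SquareFree (G : PGraph) : Prop :=
  (∀ x, ¬ G.E x x) ∧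
  ¬ ∃ a b c d : G.V, a ≠ b ∧ a ≠ c ∧ a ≠ d ∧ b ≠ c ∧ b ≠ d ∧ c ≠ d ∧
    G.E a b ∧ G.E b c ∧ G.E c d ∧ G.E d a

def nbhd (G : PGraph) (v : G.V) : Set G.V := {y | G.E v y}

def nbhd2 (G : PGraph) (v : G.V) : Set G.V := {z | ∃ y, G.E v y ∧ G.E y z}

def IsGraphCovering (G H : PGraph) (p : G.V → H.V) : Prop :=
  IsGraphHom G H p ∧ ∀ v : G.V, Set.BijOn p (nbhd G v) (nbhd H (p v))

def Is2CoveringMap (G H : PGraph) (p : G.V → H.V) : Prop :=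
  IsGraphHom G H p ∧ ∀ v : G.V,
    Set.BijOn p (nbhd G v) (nbhd H (p v)) ∧ Set.BijOn p (nbhd2 G v) (nbhd2 H (p v))

def pushforward {G H1 H2 : PGraph} (p : H1.V → H2.V) (hp : IsGraphHom H1 H2 p)
    (η : MultiHom G H1) : MultiHom G H2 where
  toFun x := p '' η.toFun x
  nonempty x := (η.nonempty x).image p
  edge := by
    rintro x y hxy a ⟨a', ha', rfl⟩ b ⟨b', hb', rfl⟩
    exact hp (η.edge hxy a' ha' b' hb')

def IsCycleWalk {G : PGraph} {a : G.V} (γ : Walk G a a) : Prop :=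
  3 ≤ γ.len ∧ ∀ i j, i < γ.len → j < γ.len → γ.toFun i = γ.toFun j → i = j

def IsTree (T : PGraph) : Prop :=
  (∀ x, ¬ T.E x x) ∧ (∀ a b : T.V, Nonempty (Walk T a b)) ∧
    ∀ (a : T.V) (γ : Walk T a a), ¬ IsCycleWalk γ

def IsPath {G : PGraph} {a b : G.V} (γ : Walk G a b) : Prop :=
  ∀ i j, i ≤ γ.len → j ≤ γ.len → γ.toFun i = γ.toFun j → i = j

def OnWalk {G : PGraph} {a b : G.V} (γ : Walk G a b) (y : G.V) : Prop :=
  ∃ i ≤ γ.len, γ.toFun i = y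

def CrossHomotopic (G H : PGraph) (f g : G.V → H.V) : Prop :=
  ∃ (n : ℕ) (h : (prodI G n).V → H.V), IsGraphHom (prodI G n) H h ∧
    (∀ x, h (x, finClip n 0) = f x) ∧ (∀ x, h (x, finClip n n) = g x)

def quotGraph (G : PGraph) (Γ : Type) [Group Γ] [MulAction Γ G.V] : PGraph where
  V := Quotient (MulAction.orbitRel Γ G.V)
  E := fun α β => ∃ x y : G.V, Quotient.mk (MulAction.orbitRel Γ G.V) x = α ∧
        Quotient.mk (MulAction.orbitRel Γ G.V) y = β ∧ G.E x y
  symm := by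
    rintro α β ⟨x, y, hx, hy, hxy⟩
    exact ⟨y, x, hy, hx, G.symm hxy⟩
section AuxLemmas

lemma eqv2_of_eqOn {G : PGraph} {a b : G.V} {γ δ : Walk G a b}
    (hlen : γ.len = δ.len) (h : ∀ i ≤ γ.len, γ.toFun i = δ.toFun i) : Eqv2 γ δ :=
  Relation.EqvGen.rel _ _ (Or.inr ⟨hlen, γ.len + 1, fun i hi _ => h i hi⟩)

lemma concat_len {G : PGraph} {a b c : G.V} (δ : Walk G a b) (ε : Walk G b c) :
    (δ.concat ε).len = δ.len + ε.len := rfl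

lemma concat_toFun {G : PGraph} {a b c : G.V} (δ : Walk G a b) (ε : Walk G b c) (i : ℕ) :
    (δ.concat ε).toFun i = if i ≤ δ.len then δ.toFun i else ε.toFun (i - δ.len) := rfl

lemma moveA_concat_left {G : PGraph} {a b c : G.V} (δ : Walk G a b) {γ γ' : Walk G b c}
    (h : MoveA γ γ') : MoveA (δ.concat γ) (δ.concat γ') := by
  obtain ⟨hlen, k, hk, hpre, hsuf⟩ := h
  refine ⟨by simp only [concat_len, hlen]; omega, δ.len + k, by simp only [concat_len]; omega, ?_, ?_⟩
  · intro i hi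
    rw [concat_toFun, concat_toFun]
    split_ifs with h1
    · rfl
    · exact hpre (i - δ.len) (by omega)
  · intro i h1 h2
    rw [concat_toFun, concat_toFun]
    rw [concat_len] at h2
    rw [if_neg (by omega : ¬ i + 2 ≤ δ.len)]
    split_ifs with h3
    ·
      have hi : i = δ.len := by omega
      have h4 : i + 2 - δ.len = 0 + 2 := by omega
      rw [h4, hsuf 0 (by omega) (by omega), γ.start_eq, hi, δ.end_eq]
    · have h4 : i + 2 - δ.len = (i - δ.len) + 2 := by omega
      rw [h4, hsuf (i - δ.len) (by omega) (by omega)]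

lemma moveB_concat_left {G : PGraph} {a b c : G.V} (δ : Walk G a b) {γ γ' : Walk G b c}
    (h : MoveB γ γ') : MoveB (δ.concat γ) (δ.concat γ') := by
  obtain ⟨hlen, j, hj⟩ := h
  refine ⟨by simp only [concat_len, hlen], δ.len + j, ?_⟩
  intro i hi hij
  rw [concat_toFun, concat_toFun]
  split_ifs with h1
  · rfl
  · rw [concat_len] at hi
    exact hj (i - δ.len) (by omega) (by omega)

lemma moveA_concat_right {G : PGraph} {a b c : G.V} {γ γ' : Walk G a b} (δ : Walk G b c)
    (h : MoveA γ γ') : MoveA (γ.concat δ) (γ'.concat δ) := by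
  obtain ⟨hlen, k, hk, hpre, hsuf⟩ := h
  refine ⟨by simp only [concat_len, hlen]; omega, k, by simp only [concat_len]; omega, ?_, ?_⟩
  · intro i hi
    rw [concat_toFun, concat_toFun,
      if_pos (by omega : i ≤ γ.len), if_pos (by omega : i ≤ γ'.len)]
    exact hpre i hi
  · intro i h1 h2
    rw [concat_len] at h2
    rw [concat_toFun, concat_toFun]
    split_ifs with h3 h4
    · rw [hsuf i h1 (by omega)]
    · omega
    · omega
    · have h5 : i + 2 - γ'.len = i - γ.len := by omega
      rw [h5]

lemma moveB_concat_right {G : PGraph} {a b c : G.V} {γ γ' : Walk G a b} (δ : Walk G b c)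
    (h : MoveB γ γ') : MoveB (γ.concat δ) (γ'.concat δ) := by
  obtain ⟨hlen, j, hj⟩ := h
  refine ⟨by simp only [concat_len, hlen], j, ?_⟩
  intro i hi hij
  rw [concat_toFun, concat_toFun]
  have : γ.len = γ'.len := hlen
  split_ifs with h1 h2
  · exact hj i h1 hij
  · omega
  · omega
  · rw [this]

lemma eqv2_concat_left {G : PGraph} {a b c : G.V} (δ : Walk G a b) {γ γ' : Walk G b c}
    (h : Eqv2 γ γ') : Eqv2 (δ.concat γ) (δ.concat γ') := by
  induction h with
  | rel x y hxy =>
    exact Relation.EqvGen.rel _ _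
      (hxy.elim (fun h => Or.inl (moveA_concat_left δ h)) (fun h => Or.inr (moveB_concat_left δ h)))
  | refl x => exact Relation.EqvGen.refl _
  | symm x y _ ih => exact Relation.EqvGen.symm _ _ ih
  | trans x y z _ _ ih1 ih2 => exact Relation.EqvGen.trans _ _ _ ih1 ih2

lemma eqv2_concat_right {G : PGraph} {a b c : G.V} {γ γ' : Walk G a b} (δ : Walk G b c)
    (h : Eqv2 γ γ') : Eqv2 (γ.concat δ) (γ'.concat δ) := by
  induction h with
  | rel x y hxy =>
    exact Relation.EqvGen.rel _ _
      (hxy.elim (fun h => Or.inl (moveA_concat_right δ h)) (fun h => Or.inr (moveB_concat_right δ h)))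
  | refl x => exact Relation.EqvGen.refl _
  | symm x y _ ih => exact Relation.EqvGen.symm _ _ ih
  | trans x y z _ _ ih1 ih2 => exact Relation.EqvGen.trans _ _ _ ih1 ih2

end AuxLemmas
section Hyb

variable {G H : PGraph} {n : ℕ} (hm : (prodI G n).V → H.V) (v v' : G.V) (γ : Walk G v v)

/-- The hybrid walk function: prefix traces the homotopy at (v, v') up to time j,
middle carries the image of γ at level j (partially pushed to level j+1, the last
t positions changed), suffix traces the homotopy from time j+1 on, shifted by γ.len. -/
def hybFun (j t : ℕ) : ℕ → H.V := fun i =>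
  if i ≤ 2*j then
    (if i % 2 = 0 then hm (v, finClip n (i/2)) else hm (v', finClip n (i/2)))
  else if i ≤ 2*j + γ.len + 1 then
    (if i - 2*j + t ≤ γ.len + 1 then
       (if i - 2*j ≤ γ.len then hm (γ.toFun (i - 2*j), finClip n j) else hm (v', finClip n j))
     else (if i - 2*j = 1 then hm (v', finClip n j)
           else hm (γ.toFun (i - 2*j - 2), finClip n (j+1))))
  else
    (if (i - γ.len) % 2 = 0 then hm (v, finClip n ((i - γ.len)/2))
     else hm (v', finClip n ((i - γ.len)/2)))

lemma finClip_val' (n t : ℕ) : (finClip n t).val = min t n := rfl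

def hybWalk (hh : IsGraphHom (prodI G n) H hm) (hvv' : G.E v v')
    (j t : ℕ) (hj : j ≤ n) (hc : j < n ∨ t ≤ 1) {w : H.V}
    (h0 : hm (v, finClip n 0) = w) (hN : hm (v, finClip n n) = w) : Walk H w w where
  len := 2*n + γ.len
  toFun := hybFun hm v v' γ j t
  start_eq := by
    unfold hybFun
    rw [if_pos (by omega : 0 ≤ 2*j), if_pos (by norm_num : (0:ℕ) % 2 = 0)]
    exact h0
  end_eq := by
    unfold hybFun
    rcases Nat.lt_or_ge j n with hc' | hge
    · rw [if_neg (by omega : ¬ 2*n + γ.len ≤ 2*j),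
        if_neg (by omega : ¬ 2*n + γ.len ≤ 2*j + γ.len + 1),
        if_pos (by omega : (2*n + γ.len - γ.len) % 2 = 0)]
      have : (2*n + γ.len - γ.len) / 2 = n := by omega
      rw [this]; exact hN
    · have hj' : j = n := by omega
      have ht : t ≤ 1 := by omega
      by_cases hL : γ.len = 0
      · rw [if_pos (by omega : 2*n + γ.len ≤ 2*j), if_pos (by omega : (2*n + γ.len) % 2 = 0)]
        have hq : (2*n + γ.len) / 2 = n := by omega
        rw [hq]; exact hN
      · rw [if_neg (by omega : ¬ 2*n + γ.len ≤ 2*j),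
          if_pos (by omega : 2*n + γ.len ≤ 2*j + γ.len + 1),
          if_pos (by omega : 2*n + γ.len - 2*j + t ≤ γ.len + 1),
          if_pos (by omega : 2*n + γ.len - 2*j ≤ γ.len)]
        have h1 : 2*n + γ.len - 2*j = γ.len := by omega
        rw [h1, γ.end_eq, hj']; exact hN
  adj := by
    intro i hi
    have key : ∀ (x y : G.V) (a b : ℕ), G.E x y → a ≤ b + 1 → b ≤ a + 1 →
        H.E (hm (x, finClip n a)) (hm (y, finClip n b)) := by
      intro x y a b hxy hab hba
      exact hh ⟨hxy, by simp only [finClip_val']; omega, by simp only [finClip_val']; omega⟩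
    have g0 := γ.start_eq
    have gL := γ.end_eq
    unfold hybFun
    split_ifs with h1 h2 h3 h4 h5 h6 h7 h8 h9 h10 h11 h12 h13 h14 h15 h16 h17 h18 h19 h20 h21 h22 h23 h24 h25 h26 h27 h28 h29 h30
    all_goals try (exfalso; omega)
    -- 1: prefix even
    · exact key _ _ _ _ hvv' (by omega) (by omega)
    -- 2: i = 2j, to mid A 1 = γ 1
    · have e : i + 1 - 2*j = 0 + 1 := by omega
      rw [e]
      have hadj := γ.adj 0 (by omega)
      rw [g0] at hadj
      exact key _ _ _ _ hadj (by omega) (by omega)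
    -- 3: i = 2j, to mid A 1 with L = 0
    · exact key _ _ _ _ hvv' (by omega) (by omega)
    -- 4: i = 2j, to mid B 1
    · exact key _ _ _ _ hvv' (by omega) (by omega)
    -- 5: prefix odd
    · exact key _ _ _ _ (G.symm hvv') (by omega) (by omega)
    -- 6: mid A s ~ A (s+1), both ≤ L
    · have e : i + 1 - 2*j = (i - 2*j) + 1 := by omega
      rw [e]
      exact key _ _ _ _ (γ.adj (i - 2*j) (by omega)) (by omega) (by omega)
    -- 7: mid A L ~ A (L+1) = v'
    · have e : i - 2*j = γ.len := by omega
      rw [e, gL]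
      exact key _ _ _ _ hvv' (by omega) (by omega)
    -- 8: mid A s ~ B (s+1)
    · have e : i - 2*j = (i + 1 - 2*j - 2) + 1 := by omega
      rw [e]
      exact key _ _ _ _ (G.symm (γ.adj (i + 1 - 2*j - 2) (by omega))) (by omega) (by omega)
    -- 9: mid A (L+1) = v' ~ suffix v
    · exact key _ _ _ _ (G.symm hvv') (by omega) (by omega)
    -- 10: mid B 1 = v' ~ B 2 = γ 0 = v
    · have e : i + 1 - 2*j - 2 = 0 := by omega
      rw [e, g0]
      exact key _ _ _ _ (G.symm hvv') (by omega) (by omega)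
    -- 11: mid B 1 (L = 0) ~ suffix v
    · exact key _ _ _ _ (G.symm hvv') (by omega) (by omega)
    -- 12: mid B s ~ B (s+1), s ≥ 2
    · have e : i + 1 - 2*j - 2 = (i - 2*j - 2) + 1 := by omega
      rw [e]
      exact key _ _ _ _ (γ.adj (i - 2*j - 2) (by omega)) (by omega) (by omega)
    -- 13: mid B (L+1) = γ (L-1) ~ suffix v
    · have e1 : i - 2*j - 2 = γ.len - 1 := by omega
      rw [e1]
      have e2 : γ.len - 1 + 1 = γ.len := by omega
      have hadj := γ.adj (γ.len - 1) (by omega)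
      rw [e2, gL] at hadj
      exact key _ _ _ _ hadj (by omega) (by omega)
    -- 14: suffix even
    · exact key _ _ _ _ hvv' (by omega) (by omega)
    -- 15: suffix odd
    · exact key _ _ _ _ (G.symm hvv') (by omega) (by omega)

end Hyb
section Hyb2

variable {G H : PGraph} {n : ℕ} (hm : (prodI G n).V → H.V) (v v' : G.V) (γ : Walk G v v)
  (hh : IsGraphHom (prodI G n) H hm) (hvv' : G.E v v')
  {w : H.V} (h0 : hm (v, finClip n 0) = w) (hN : hm (v, finClip n n) = w)

lemma hyb_moveB (j t : ℕ) (hjn : j < n) :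
    MoveB (hybWalk hm v v' γ hh hvv' j t hjn.le (Or.inl hjn) h0 hN)
      (hybWalk hm v v' γ hh hvv' j (t+1) hjn.le (Or.inl hjn) h0 hN) := by
  refine ⟨rfl, 2*j + γ.len + 1 - t, ?_⟩
  intro i hi hne
  show hybFun hm v v' γ j t i = hybFun hm v v' γ j (t+1) i
  unfold hybFun
  split_ifs <;> first | rfl | (exfalso; omega)

lemma hyb_chain_t (j : ℕ) (hjn : j < n) (t : ℕ) :
    Eqv2 (hybWalk hm v v' γ hh hvv' j 0 hjn.le (Or.inl hjn) h0 hN)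
      (hybWalk hm v v' γ hh hvv' j t hjn.le (Or.inl hjn) h0 hN) := by
  induction t with
  | zero => exact Relation.EqvGen.refl _
  | succ t ih =>
    exact Relation.EqvGen.trans _ _ _ ih
      (Relation.EqvGen.rel _ _ (Or.inr (hyb_moveB hm v v' γ hh hvv' h0 hN j t hjn)))

lemma hyb_shift (j : ℕ) (hjn : j < n) :
    Eqv2 (hybWalk hm v v' γ hh hvv' j (γ.len + 1) hjn.le (Or.inl hjn) h0 hN)
      (hybWalk hm v v' γ hh hvv' (j+1) 0 (by omega) (Or.inr (by omega)) h0 hN) := by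
  refine eqv2_of_eqOn rfl ?_
  intro i hi
  show hybFun hm v v' γ j (γ.len + 1) i = hybFun hm v v' γ (j+1) 0 i
  have g0 := γ.start_eq
  have gL := γ.end_eq
  have hswap : ∀ (x y : G.V) (c d : ℕ), x = y → min c n = min d n →
      hm (x, finClip n c) = hm (y, finClip n d) := by
    rintro x y c d rfl hcd
    exact congrArg (fun z => hm (x, z)) (Fin.ext hcd)
  unfold hybFun
  split_ifs
  all_goals try rfl
  all_goals try (exfalso; omega)
  · exact hswap _ _ _ _ rfl (by omega)
  · have e : i - 2*j - 2 = 0 := by omega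
    rw [e, g0]
    exact hswap _ _ _ _ rfl (by omega)
  · exact hswap _ _ _ _ rfl (by omega)
  · have e : i - 2*(j+1) = γ.len := by omega
    rw [e, gL]
    exact hswap _ _ _ _ rfl (by omega)
  · exact hswap _ _ _ _ rfl (by omega)

lemma hyb_chain (j : ℕ) (hj : j ≤ n) :
    Eqv2 (hybWalk hm v v' γ hh hvv' 0 0 (by omega) (Or.inr (by omega)) h0 hN)
      (hybWalk hm v v' γ hh hvv' j 0 hj (Or.inr (by omega)) h0 hN) := by
  induction j with
  | zero => exact Relation.EqvGen.refl _
  | succ j ih =>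
    have hjn : j < n := by omega
    refine Relation.EqvGen.trans _ _ _ (ih hjn.le) ?_
    exact Relation.EqvGen.trans _ _ _ (hyb_chain_t hm v v' γ hh hvv' h0 hN j hjn (γ.len + 1))
      (hyb_shift hm v v' γ hh hvv' h0 hN j hjn)

end Hyb2
theorem statement_10 (G H : PGraph) [Finite G.V] [Finite H.V]
    (hGconn : PGraph.Connected G) (hHconn : PGraph.Connected H)
    (hGe : ∃ x y : G.V, G.E x y) (hHe : ∃ x y : H.V, H.E x y)
    (f : G.V → H.V) (hf : IsGraphHom G H f)
    (v : G.V) (hv : ∃ v' : G.V, G.E v v')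
    (γ : Walk G v v) (ω : Walk H (f v) (f v)) (hω : Realizable f v ω) :
    Eqv2 ((Walk.map f hf γ).concat ω) (ω.concat (Walk.map f hf γ)) := by
  obtain ⟨n, hm, hh, hs, he, v', hvv', hωρ⟩ := hω
  have h0 : hm (v, finClip n 0) = f v := hs v
  have hN : hm (v, finClip n n) = f v := he v
  have g0 := γ.start_eq
  have gL := γ.end_eq
  set δ := Walk.map f hf γ with hδ
  set ρ := realizedWalk hm hh hvv' (hs v) (he v) with hρ
  have e1 : Eqv2 (δ.concat ρ)
      (hybWalk hm v v' γ hh hvv' 0 0 (Nat.zero_le n) (Or.inr (by omega)) h0 hN) := by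
    refine eqv2_of_eqOn (by show γ.len + 2*n = 2*n + γ.len; omega) ?_
    intro i hi
    rw [concat_toFun]
    show (if i ≤ γ.len then f (γ.toFun i) else ρ.toFun (i - γ.len)) = hybFun hm v v' γ 0 0 i
    have hi' : i ≤ γ.len + 2*n := hi
    unfold hybFun
    show _ = _
    simp only [hρ, realizedWalk]
    have hswap : ∀ (x : G.V) (c d : ℕ), min c n = min d n →
        hm (x, finClip n c) = hm (x, finClip n d) := by
      intro x c d hcd
      exact congrArg (fun z => hm (x, z)) (Fin.ext hcd)
    split_ifs
    all_goals try rfl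
    all_goals try (exfalso; omega)
    · have e : i = 0 := by omega
      subst e
      rw [g0]
      simp only [Nat.zero_div]
      exact h0.symm
    · simp only [Nat.mul_zero, Nat.sub_zero]
      exact (hs _).symm
    · exact hswap _ _ _ (by omega)
  have e3 : Eqv2 (hybWalk hm v v' γ hh hvv' n 0 le_rfl (Or.inr (by omega)) h0 hN)
      (ρ.concat δ) := by
    refine eqv2_of_eqOn (by show 2*n + γ.len = 2*n + γ.len; rfl) ?_
    intro i hi
    rw [concat_toFun]
    show hybFun hm v v' γ n 0 i = (if i ≤ 2*n then ρ.toFun i else f (γ.toFun (i - 2*n)))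
    have hi' : i ≤ 2*n + γ.len := hi
    unfold hybFun
    simp only [hρ, realizedWalk]
    split_ifs
    all_goals try rfl
    all_goals try (exfalso; omega)
    · exact he _
  have e2 := hyb_chain hm v v' γ hh hvv' h0 hN n le_rfl
  refine Relation.EqvGen.trans _ _ _ (eqv2_concat_left δ hωρ) ?_
  refine Relation.EqvGen.trans _ _ _ e1 ?_
  refine Relation.EqvGen.trans _ _ _ e2 ?_
  refine Relation.EqvGen.trans _ _ _ e3 ?_
  exact eqv2_concat_right δ (Relation.EqvGen.symm _ _ hωρ)
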